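/- Let V ∈ C^r(ℝ) with r ≥ 1 be such that on an interval [x₊(E₋), x₊(E₊)] the function V is strictly increasing with V' > 0, and let W₊ denote the inverse of V restricted to this interval. Then for λ ∈ (E₋, E₊), the integral T₊(λ) = ∫_{x₊(E₋)}^{x₊(λ)} dx/√(λ − V(x)) satisfies T₊(λ) = 2√(λ − E₋) ∫₀¹ dt / V'(W₊(λ(1−t²) + E₋ t²)), and consequently T₊ is (r−1) times continuously differentiable on (E₋, E₊). -/

import Mathlib

open Set Filter MeasureTheory intervalIntegral
open scoped Topology

lemma stmt8_key_mem {Em Ep lam t : ℝ} (hlam : lam ∈ Set.Ioo Em Ep) (ht : t ∈ Set.Icc (0:ℝ) 1) :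
    lam - (lam - Em) * t ^ 2 ∈ Set.Icc Em Ep := by
  obtain ⟨h1, h2⟩ := hlam
  obtain ⟨h3, h4⟩ := ht
  have ht2 : t ^ 2 ≤ 1 := by nlinarith
  have h5 : (lam - Em) * t ^ 2 ≤ lam - Em :=
    mul_le_of_le_one_right (sub_pos.mpr h1).le ht2
  have h6 : 0 ≤ (lam - Em) * t ^ 2 := mul_nonneg (sub_pos.mpr h1).le (sq_nonneg t)
  constructor <;> linarith

lemma stmt8_paramC (Em Ep : ℝ) :
    ∀ (k : ℕ) (P F : ℝ → ℝ), Continuous P →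
      (∀ s ∈ Set.Icc Em Ep, ContDiffAt ℝ k F s) →
      ContDiffOn ℝ k (fun lam => ∫ t in (0:ℝ)..1, P t * F (lam - (lam - Em) * t ^ 2))
        (Set.Ioo Em Ep) := by
  intro k
  induction k with
  | zero =>
    intro P F hP hF
    obtain ⟨MF, hMF⟩ := isCompact_Icc.exists_bound_of_continuousOn
      (fun s hs => (hF s hs).continuousAt.continuousWithinAt)
    obtain ⟨MP, hMP⟩ := (isCompact_Icc (a := (0:ℝ)) (b := 1)).exists_bound_of_continuousOn
      hP.continuousOn
    have hcontOn : ∀ lam ∈ Set.Ioo Em Ep,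
        ContinuousOn (fun t => P t * F (lam - (lam - Em) * t ^ 2)) (Set.Icc 0 1) := by
      intro lam hlam t ht
      have h1 : ContinuousAt (fun t : ℝ => lam - (lam - Em) * t ^ 2) t := by fun_prop
      have h2' : ContinuousAt (F ∘ fun t : ℝ => lam - (lam - Em) * t ^ 2) t :=
        ContinuousAt.comp (hF _ (stmt8_key_mem hlam ht)).continuousAt h1
      have h2 : ContinuousAt (fun t : ℝ => F (lam - (lam - Em) * t ^ 2)) t := h2'
      exact (hP.continuousAt.mul h2).continuousWithinAt
    rw [show ((0:ℕ) : WithTop ℕ∞) = 0 from rfl, contDiffOn_zero]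
    intro lam0 hlam0
    have hIoc : Set.uIoc (0:ℝ) 1 = Set.Ioc 0 1 := uIoc_of_le zero_le_one
    refine tendsto_integral_filter_of_dominated_convergence (fun _ => MP * MF) ?_ ?_ ?_ ?_
    · filter_upwards [nhdsWithin_le_nhds (isOpen_Ioo.mem_nhds hlam0)] with lam hlam
      rw [hIoc]
      exact ((hcontOn lam hlam).mono Ioc_subset_Icc_self).aestronglyMeasurable measurableSet_Ioc
    · filter_upwards [nhdsWithin_le_nhds (isOpen_Ioo.mem_nhds hlam0)] with lam hlam
      refine Eventually.of_forall fun t ht => ?_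
      rw [hIoc] at ht
      have ht' : t ∈ Set.Icc (0:ℝ) 1 := Ioc_subset_Icc_self ht
      rw [norm_mul]
      exact mul_le_mul (hMP t ht') (hMF _ (stmt8_key_mem hlam ht')) (norm_nonneg _)
        ((norm_nonneg _).trans (hMP t ht'))
    · exact intervalIntegrable_const
    · refine Eventually.of_forall fun t ht => ?_
      rw [hIoc] at ht
      have ht' : t ∈ Set.Icc (0:ℝ) 1 := Ioc_subset_Icc_self ht
      have h1 : ContinuousAt (fun lam : ℝ => lam - (lam - Em) * t ^ 2) lam0 := by fun_prop
      have h2 : Tendsto (fun lam : ℝ => lam - (lam - Em) * t ^ 2) (𝓝[Set.Ioo Em Ep] lam0)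
          (𝓝 (lam0 - (lam0 - Em) * t ^ 2)) := h1.tendsto.mono_left nhdsWithin_le_nhds
      exact tendsto_const_nhds.mul
        (((hF _ (stmt8_key_mem hlam0 ht')).continuousAt.tendsto).comp h2)
  | succ k ih =>
    intro P F hP hF
    have hr1 : (1 : WithTop ℕ∞) ≤ ((k+1 : ℕ) : WithTop ℕ∞) := by
      exact_mod_cast Nat.succ_le_succ (Nat.zero_le k)
    have hdF : ∀ s ∈ Set.Icc Em Ep, ContDiffAt ℝ k (deriv F) s := by
      intro s hs
      have h1 : ContDiffAt ℝ k (fun x => fderiv ℝ F x 1) s := by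
        refine ContDiffAt.clm_apply ((hF s hs).fderiv_right ?_) contDiffAt_const
        exact_mod_cast le_refl (k+1 : ℕ)
      exact h1.congr_of_eventuallyEq (Eventually.of_forall fun x => (fderiv_apply_one_eq_deriv).symm)
    obtain ⟨M, hM⟩ := isCompact_Icc.exists_bound_of_continuousOn
      (fun s hs => (hdF s hs).continuousAt.continuousWithinAt)
    obtain ⟨MP, hMP⟩ := (isCompact_Icc (a := (0:ℝ)) (b := 1)).exists_bound_of_continuousOn
      hP.continuousOn
    have hIoc : Set.uIoc (0:ℝ) 1 = Set.Ioc 0 1 := uIoc_of_le zero_le_one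
    have hU : Set.uIcc (0:ℝ) 1 = Set.Icc 0 1 := uIcc_of_le zero_le_one
    have hcontOn : ∀ lam ∈ Set.Ioo Em Ep,
        ContinuousOn (fun t => P t * F (lam - (lam - Em) * t ^ 2)) (Set.Icc 0 1) := by
      intro lam hlam t ht
      have h1 : ContinuousAt (fun t : ℝ => lam - (lam - Em) * t ^ 2) t := by fun_prop
      have h2' : ContinuousAt (F ∘ fun t : ℝ => lam - (lam - Em) * t ^ 2) t :=
        ContinuousAt.comp (hF _ (stmt8_key_mem hlam ht)).continuousAt h1
      have h2 : ContinuousAt (fun t : ℝ => F (lam - (lam - Em) * t ^ 2)) t := h2'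
      exact (hP.continuousAt.mul h2).continuousWithinAt
    have hcontOn' : ∀ lam ∈ Set.Ioo Em Ep,
        ContinuousOn (fun t => P t * (1 - t ^ 2) * deriv F (lam - (lam - Em) * t ^ 2))
          (Set.Icc 0 1) := by
      intro lam hlam t ht
      have h1 : ContinuousAt (fun t : ℝ => lam - (lam - Em) * t ^ 2) t := by fun_prop
      have h2' : ContinuousAt (deriv F ∘ fun t : ℝ => lam - (lam - Em) * t ^ 2) t :=
        ContinuousAt.comp (hdF _ (stmt8_key_mem hlam ht)).continuousAt h1
      have h2 : ContinuousAt (fun t : ℝ => deriv F (lam - (lam - Em) * t ^ 2)) t := h2'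
      exact ((hP.continuousAt.mul (by fun_prop)).mul h2).continuousWithinAt
    have key : ∀ lam0 ∈ Set.Ioo Em Ep,
        HasDerivAt (fun lam => ∫ t in (0:ℝ)..1, P t * F (lam - (lam - Em) * t ^ 2))
          (∫ t in (0:ℝ)..1, P t * (1 - t ^ 2) * deriv F (lam0 - (lam0 - Em) * t ^ 2)) lam0 := by
      intro lam0 hlam0
      obtain ⟨ε, hε, hball⟩ := Metric.isOpen_iff.mp isOpen_Ioo lam0 hlam0
      refine (intervalIntegral.hasDerivAt_integral_of_dominated_loc_of_deriv_le
        (F := fun lam t => P t * F (lam - (lam - Em) * t ^ 2))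
        (F' := fun lam t => P t * (1 - t ^ 2) * deriv F (lam - (lam - Em) * t ^ 2))
        (bound := fun _ => MP * M) (Metric.ball_mem_nhds lam0 hε) ?_ ?_ ?_ ?_ ?_ ?_).2
      · filter_upwards [isOpen_Ioo.mem_nhds hlam0] with lam hlam
        rw [hIoc]
        exact ((hcontOn lam hlam).mono Ioc_subset_Icc_self).aestronglyMeasurable
          measurableSet_Ioc
      · apply ContinuousOn.intervalIntegrable
        rw [hU]; exact hcontOn lam0 hlam0
      · rw [hIoc]
        exact ((hcontOn' lam0 hlam0).mono Ioc_subset_Icc_self).aestronglyMeasurable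
          measurableSet_Ioc
      · refine Eventually.of_forall fun t ht lam hlam => ?_
        rw [hIoc] at ht
        have ht' : t ∈ Set.Icc (0:ℝ) 1 := Ioc_subset_Icc_self ht
        have hlam' : lam ∈ Set.Ioo Em Ep := hball hlam
        have e1 : ‖P t * (1 - t ^ 2)‖ ≤ MP := by
          rw [norm_mul]
          have : ‖(1 : ℝ) - t ^ 2‖ ≤ 1 := by
            rw [Real.norm_eq_abs, abs_le]; constructor <;> nlinarith [ht'.1, ht'.2]
          calc ‖P t‖ * ‖(1:ℝ) - t ^ 2‖ ≤ ‖P t‖ * 1 :=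
                mul_le_mul_of_nonneg_left this (norm_nonneg _)
            _ = ‖P t‖ := mul_one _
            _ ≤ MP := hMP t ht'
        rw [norm_mul]
        exact mul_le_mul e1 (hM _ (stmt8_key_mem hlam' ht')) (norm_nonneg _)
          ((norm_nonneg _).trans e1)
      · exact intervalIntegrable_const
      · refine Eventually.of_forall fun t ht lam hlam => ?_
        rw [hIoc] at ht
        have ht' : t ∈ Set.Icc (0:ℝ) 1 := Ioc_subset_Icc_self ht
        have hlam' : lam ∈ Set.Ioo Em Ep := hball hlam
        have hinner : HasDerivAt (fun lam : ℝ => lam - (lam - Em) * t ^ 2) (1 - t ^ 2) lam := by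
          exact ((hasDerivAt_id lam).sub (((hasDerivAt_id lam).sub_const Em).mul_const (t^2))).congr_deriv (by ring)
        have hDF : HasDerivAt F (deriv F (lam - (lam - Em) * t ^ 2))
            (lam - (lam - Em) * t ^ 2) :=
          ((hF _ (stmt8_key_mem hlam' ht')).differentiableAt (by simp)).hasDerivAt
        have hcomp := hDF.comp lam hinner
        have := hcomp.const_mul (P t)
        refine this.congr_deriv ?_
        ring
    have hcast : ((k+1 : ℕ) : WithTop ℕ∞) = (k : WithTop ℕ∞) + 1 := by push_cast; rfl
    rw [hcast, contDiffOn_succ_iff_deriv_of_isOpen isOpen_Ioo]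
    refine ⟨fun lam hlam => (key lam hlam).differentiableAt.differentiableWithinAt, ?_, ?_⟩
    · intro h; exact absurd h (by simp)
    · have h2 := ih (fun t => P t * (1 - t ^ 2)) (deriv F) (by fun_prop) hdF
      refine h2.congr fun lam hlam => ?_
      have := (key lam hlam).deriv
      rw [this]

theorem stmt8 (r : ℕ) (hr : 1 ≤ r) (V W : ℝ → ℝ) (a b Em Ep : ℝ)
    (hab : a < b) (hV : ContDiff ℝ r V)
    (hV' : ∀ x ∈ Set.Icc a b, 0 < deriv V x)
    (hVa : V a = Em) (hVb : V b = Ep)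
    (hW : ∀ x ∈ Set.Icc a b, W (V x) = x)
    (hW2 : ∀ lam ∈ Set.Icc Em Ep, W lam ∈ Set.Icc a b ∧ V (W lam) = lam) :
    (∀ lam ∈ Set.Ioo Em Ep,
      (∫ x in a..(W lam), (Real.sqrt (lam - V x))⁻¹)
        = 2 * Real.sqrt (lam - Em)
          * ∫ t in (0:ℝ)..1, (deriv V (W (lam * (1 - t^2) + Em * t^2)))⁻¹) ∧
    ContDiffOn ℝ (r - 1 : ℕ) (fun lam => ∫ x in a..(W lam), (Real.sqrt (lam - V x))⁻¹)
      (Set.Ioo Em Ep) := by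
  classical
  have hrW : (1 : WithTop ℕ∞) ≤ (r : WithTop ℕ∞) := by exact_mod_cast hr
  have hrW0 : (r : WithTop ℕ∞) ≠ 0 := by exact_mod_cast (by omega : r ≠ 0)
  have hVd : Differentiable ℝ V := hV.differentiable hrW0
  have hVc : Continuous V := hVd.continuous
  have hdVc : Continuous (deriv V) := hV.continuous_deriv hrW
  have hVmono : StrictMonoOn V (Set.Icc a b) := by
    apply strictMonoOn_of_deriv_pos (convex_Icc a b) hVc.continuousOn
    intro x hx
    rw [interior_Icc] at hx
    exact hV' x (Set.Ioo_subset_Icc_self hx)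
  have hEmEp : Em < Ep := by
    rw [← hVa, ← hVb]
    exact hVmono (Set.left_mem_Icc.mpr hab.le) (Set.right_mem_Icc.mpr hab.le) hab
  -- thickened interval K on which V' > 0
  have hopen : IsOpen {x : ℝ | 0 < deriv V x} := isOpen_lt continuous_const hdVc
  obtain ⟨δ, hδ, hsub⟩ := (isCompact_Icc (a := a) (b := b)).exists_cthickening_subset_open
    hopen (fun x hx => hV' x hx)
  set K := Set.Icc (a - δ) (b + δ) with hKdef
  have hKthick : K ⊆ Metric.cthickening δ (Set.Icc a b) := by
    intro x hx
    obtain ⟨hx1, hx2⟩ := hx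
    have hy1 : a ≤ max a (min x b) := le_max_left _ _
    have hy2 : max a (min x b) ≤ b := max_le hab.le (min_le_right _ _)
    refine Metric.mem_cthickening_of_dist_le x (max a (min x b)) δ _ ⟨hy1, hy2⟩ ?_
    rw [Real.dist_eq, abs_le]
    rcases le_total x b with h | h
    · rcases le_total a x with h' | h'
      · rw [min_eq_left h, max_eq_right h']
        constructor <;> linarith
      · rw [min_eq_left h, max_eq_left h']
        constructor <;> linarith
    · rw [min_eq_right h, max_eq_right hab.le]
      constructor <;> linarith
  have hKpos : ∀ x ∈ K, 0 < deriv V x := fun x hx => hsub (hKthick hx)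
  have habK : Set.Icc a b ⊆ K := Set.Icc_subset_Icc (by linarith) (by linarith)
  have hKmono : StrictMonoOn V K := by
    apply strictMonoOn_of_deriv_pos (convex_Icc _ _) hVc.continuousOn
    intro x hx
    rw [interior_Icc] at hx
    exact hKpos x (Set.Ioo_subset_Icc_self hx)
  have hKinj : Set.InjOn V K := hKmono.injOn
  set Wi := Function.invFunOn V K with hWidef
  have hWiW : ∀ s ∈ Set.Icc Em Ep, Wi s = W s := by
    intro s hs
    obtain ⟨h1, h2⟩ := hW2 s hs
    have hex : ∃ x ∈ K, V x = s := ⟨W s, habK h1, h2⟩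
    refine hKinj (Function.invFunOn_mem hex) (habK h1) ?_
    rw [Function.invFunOn_eq hex, h2]
  have hWiIcc : ∀ s ∈ Set.Icc Em Ep, Wi s ∈ Set.Icc a b ∧ V (Wi s) = s := by
    intro s hs; rw [hWiW s hs]; exact hW2 s hs
  have hWiVx : ∀ x ∈ Set.Icc a b, Wi (V x) = x := by
    intro x hx
    have hex : ∃ y ∈ K, V y = V x := ⟨x, habK hx, rfl⟩
    exact hKinj (Function.invFunOn_mem hex) (habK hx) (Function.invFunOn_eq hex)
  have hWiSmooth : ∀ s ∈ Set.Icc Em Ep, ContDiffAt ℝ r Wi s := by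
    intro s hs
    obtain ⟨hx, hVx⟩ := hWiIcc s hs
    have hd : deriv V (Wi s) ≠ 0 := (hV' _ hx).ne'
    have hVat : ContDiffAt ℝ r V (Wi s) := hV.contDiffAt
    have hder : HasFDerivAt V
        ((ContinuousLinearEquiv.unitsEquivAut ℝ (Units.mk0 _ hd)) : ℝ →L[ℝ] ℝ) (Wi s) :=
      (hVd (Wi s)).hasDerivAt.hasFDerivAt_equiv hd
    have hinv : ContDiffAt ℝ r (hVat.localInverse hder hrW0) (V (Wi s)) :=
      hVat.to_localInverse hder hrW0
    rw [hVx] at hinv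
    set H := hVat.hasStrictFDerivAt' hder hrW0 with hHdef
    have hgdef : hVat.localInverse hder hrW0 = H.localInverse V _ (Wi s) := rfl
    have hev1 : ∀ᶠ y in 𝓝 s, V (hVat.localInverse hder hrW0 y) = y := by
      have := H.eventually_right_inverse
      rw [hVx] at this
      exact this
    have hcont : ContinuousAt (hVat.localInverse hder hrW0) s := by
      have := H.localInverse_continuousAt
      rw [hVx] at this
      exact this
    have hx0int : Wi s ∈ Set.Ioo (a - δ) (b + δ) :=
      ⟨by linarith [hx.1], by linarith [hx.2]⟩
    have hev2 : ∀ᶠ y in 𝓝 s, hVat.localInverse hder hrW0 y ∈ Set.Ioo (a - δ) (b + δ) := by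
      have hmemnhds : Set.Ioo (a - δ) (b + δ) ∈ 𝓝 (Wi s) := isOpen_Ioo.mem_nhds hx0int
      have h3 : hVat.localInverse hder hrW0 s = Wi s := by
        have := hVat.localInverse_apply_image hder hrW0
        rw [hVx] at this
        exact this
      rw [← h3] at hmemnhds
      exact hcont hmemnhds
    have heq : Wi =ᶠ[𝓝 s] hVat.localInverse hder hrW0 := by
      filter_upwards [hev1, hev2] with y h1 h2
      have hex : ∃ x ∈ K, V x = y := ⟨_, Set.Ioo_subset_Icc_self h2, h1⟩
      refine hKinj (Function.invFunOn_mem hex) (Set.Ioo_subset_Icc_self h2) ?_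
      rw [Function.invFunOn_eq hex, h1]
    exact hinv.congr_of_eventuallyEq heq
  have hdV : ContDiff ℝ (r - 1 : ℕ) (deriv V) := by
    have hcast : ((r - 1 : ℕ) : WithTop ℕ∞) + 1 = ((r : ℕ) : WithTop ℕ∞) := by
      have h1 : r - 1 + 1 = r := Nat.succ_pred_eq_of_pos hr
      exact_mod_cast congrArg (Nat.cast : ℕ → WithTop ℕ∞) h1
    have h2 : ContDiff ℝ (((r - 1 : ℕ) : WithTop ℕ∞) + 1) V := by rw [hcast]; exact hV
    exact (contDiff_succ_iff_deriv.mp h2).2.2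
  set G := fun s => (deriv V (Wi s))⁻¹ with hGdef
  have hG : ∀ s ∈ Set.Icc Em Ep, ContDiffAt ℝ (r - 1 : ℕ) G s := by
    intro s hs
    have h1 : ContDiffAt ℝ (r - 1 : ℕ) Wi s :=
      (hWiSmooth s hs).of_le (by exact_mod_cast Nat.sub_le r 1)
    have h2 : ContDiffAt ℝ (r - 1 : ℕ) (deriv V ∘ Wi) s := hdV.contDiffAt.comp s h1
    exact h2.inv ((hV' _ (hWiIcc s hs).1).ne')
  -- minimum of deriv V on [a,b]
  obtain ⟨xm, hxm, hmin⟩ := isCompact_Icc.exists_isMinOn (Set.nonempty_Icc.mpr hab.le)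
    hdVc.continuousOn
  set m := deriv V xm with hmdef
  have hm : 0 < m := hV' xm hxm
  have hmle : ∀ x ∈ Set.Icc a b, m ≤ deriv V x := fun x hx => hmin hx
  have hgrow : ∀ x ∈ Set.Icc a b, ∀ y ∈ Set.Icc a b, x ≤ y → m * (y - x) ≤ V y - V x := by
    intro x hx y hy hxy
    have hD : ∀ z : ℝ, HasDerivAt (fun z => V z - m * z) (deriv V z - m) z := fun z => by
      exact ((hVd z).hasDerivAt.sub ((hasDerivAt_id z).const_mul m)).congr_deriv (by ring)
    have hmono2 : MonotoneOn (fun z => V z - m * z) (Set.Icc a b) := by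
      apply monotoneOn_of_deriv_nonneg (convex_Icc a b)
        ((hVc.sub (continuous_const.mul continuous_id')).continuousOn)
      · intro z hz
        exact (hD z).differentiableAt.differentiableWithinAt
      · intro z hz
        rw [interior_Icc] at hz
        have hz' : z ∈ Set.Icc a b := Set.Ioo_subset_Icc_self hz
        rw [show deriv (V - (fun x => deriv V xm) * fun x => x) z = deriv V z - m from (hD z).deriv]
        linarith [hmle z hz']
    have := hmono2 hx hy hxy
    simp only [] at this
    linarith [this]
  have hVxIcc : ∀ x ∈ Set.Icc a b, V x ∈ Set.Icc Em Ep := by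
    intro x hx
    constructor
    · rw [← hVa]
      exact hVmono.monotoneOn (Set.left_mem_Icc.mpr hab.le) hx hx.1
    · rw [← hVb]
      exact hVmono.monotoneOn hx (Set.right_mem_Icc.mpr hab.le) hx.2
  have main : ∀ lam ∈ Set.Ioo Em Ep,
      (∫ x in a..(W lam), (Real.sqrt (lam - V x))⁻¹)
        = 2 * Real.sqrt (lam - Em)
          * ∫ t in (0:ℝ)..1, (deriv V (W (lam * (1 - t^2) + Em * t^2)))⁻¹ := by
    intro lam hlamIoo
    obtain ⟨hEm1, hEp1⟩ := hlamIoo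
    have hlamIoo' : lam ∈ Set.Ioo Em Ep := ⟨hEm1, hEp1⟩
    have hlamIcc : lam ∈ Set.Icc Em Ep := ⟨hEm1.le, hEp1.le⟩
    set c := lam - Em with hcdef
    have hc : 0 < c := by simp only [hcdef]; linarith
    set sq := Real.sqrt c with hsqdef
    have hsq : 0 < sq := Real.sqrt_pos.mpr hc
    set B := W lam with hBdef
    have hB : B ∈ Set.Icc a b := (hW2 lam hlamIcc).1
    have hVB : V B = lam := (hW2 lam hlamIcc).2
    have haB : a ≤ B := hB.1
    set f := fun x => (Real.sqrt (lam - V x))⁻¹ with hfdef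
    have hfm : AEStronglyMeasurable f (volume.restrict (Set.uIoc a B)) :=
      ((Real.continuous_sqrt.measurable.comp
        (measurable_const.sub hVc.measurable)).inv).aestronglyMeasurable
    have hint : IntervalIntegrable f volume a B := by
      have h0 : IntervalIntegrable (fun x : ℝ => x ^ (-(1/2) : ℝ)) volume (B - a) 0 :=
        intervalIntegrable_rpow' (by norm_num)
      have h1 := h0.comp_sub_left B
      simp only [sub_sub_cancel, sub_zero] at h1
      have h2 : IntervalIntegrable (fun x => (Real.sqrt m)⁻¹ * (B - x) ^ (-(1/2) : ℝ))
          volume a B := h1.const_mul _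
      refine h2.mono_fun' hfm ?_
      rw [Filter.EventuallyLE, ae_restrict_iff' measurableSet_uIoc]
      refine Filter.Eventually.of_forall fun x hx => ?_
      rw [Set.uIoc_of_le haB] at hx
      obtain ⟨hx1, hx2⟩ := hx
      have hxab : x ∈ Set.Icc a b := ⟨hx1.le, hx2.trans hB.2⟩
      have hgrow' : m * (B - x) ≤ lam - V x := by
        have := hgrow x hxab B hB hx2
        rw [hVB] at this; linarith
      have hBx : 0 ≤ B - x := by linarith
      have hfael : ‖f x‖ = (Real.sqrt (lam - V x))⁻¹ := by
        rw [Real.norm_eq_abs, abs_of_nonneg (inv_nonneg.mpr (Real.sqrt_nonneg _))]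
      have hsplit : (Real.sqrt m)⁻¹ * (B - x) ^ (-(1/2) : ℝ)
          = (Real.sqrt (m * (B - x)))⁻¹ := by
        rw [Real.sqrt_mul hm.le, mul_inv, Real.rpow_neg hBx]
        simp [Real.sqrt_eq_rpow]
      simp only [hfael, hsplit]
      rcases eq_or_lt_of_le hx2 with heq | hlt
      · rw [heq, hVB, sub_self, Real.sqrt_zero, inv_zero]
        exact inv_nonneg.mpr (Real.sqrt_nonneg _)
      · have h3 : 0 < m * (B - x) := mul_pos hm (by linarith)
        exact inv_anti₀ (Real.sqrt_pos.mpr h3) (Real.sqrt_le_sqrt hgrow')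
    have hPrim : ContinuousOn (fun u => ∫ x in a..u, f x) (Set.Icc a B) := by
      have h1 := intervalIntegral.continuousOn_primitive_interval (a := a) (b := B)
        (f := f) (μ := volume) (by
          rw [Set.uIcc_of_le haB, integrableOn_Icc_iff_integrableOn_Ioc]
          exact hint.1)
      rwa [Set.uIcc_of_le haB] at h1
    -- the substitution identity for each ε ∈ (0, 1]
    have hsubst : ∀ ε : ℝ, ε ∈ Set.Ioc (0:ℝ) 1 →
        ∫ x in a..(Wi (lam - c * ε ^ 2)), f x
          = ∫ u in ε..1, (2 * sq) * G (lam - c * u ^ 2) := by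
      intro ε hε
      obtain ⟨hε0, hε1⟩ := hε
      set s0 := lam - c * ε ^ 2 with hs0def
      have hs0Icc : s0 ∈ Set.Icc Em Ep := by
        have := stmt8_key_mem hlamIoo' (Set.mem_Icc.mpr ⟨hε0.le, hε1⟩)
        simpa [hs0def, hcdef] using this
      set p := Wi s0 with hpdef
      have hp : p ∈ Set.Icc a b := (hWiIcc s0 hs0Icc).1
      have hVp : V p = s0 := (hWiIcc s0 hs0Icc).2
      have hap : a ≤ p := hp.1
      have hVxle : ∀ x ∈ Set.Icc a p, V x ≤ s0 := by
        intro x hx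
        have hx' : x ∈ Set.Icc a b := ⟨hx.1, hx.2.trans hp.2⟩
        have := hVmono.monotoneOn hx' hp hx.2
        rwa [hVp] at this
      have hpos : ∀ x ∈ Set.Icc a p, 0 < lam - V x := by
        intro x hx
        have h1 := hVxle x hx
        have h2 : 0 < c * ε ^ 2 := mul_pos hc (pow_pos hε0 2)
        simp only [hs0def] at h1
        linarith
      set tmap := fun x => Real.sqrt (lam - V x) / sq with htmapdef
      set tder := fun x => -deriv V x / (2 * Real.sqrt (lam - V x)) / sq with htderdef
      have htd : ∀ x ∈ Set.uIcc a p, HasDerivAt tmap (tder x) x := by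
        intro x hx
        rw [Set.uIcc_of_le hap] at hx
        have h1 : HasDerivAt (fun x => lam - V x) (-deriv V x) x := by
          exact ((hasDerivAt_const x lam).sub (hVd x).hasDerivAt).congr_deriv (by ring)
        have h2 := h1.sqrt (ne_of_gt (hpos x hx))
        exact h2.div_const sq
      have htdc : ContinuousOn tder (Set.uIcc a p) := by
        rw [Set.uIcc_of_le hap]
        intro x hx
        have hne : 2 * Real.sqrt (lam - V x) ≠ 0 :=
          (mul_pos two_pos (Real.sqrt_pos.mpr (hpos x hx))).ne'
        have hnum : ContinuousAt (fun x => -deriv V x) x := hdVc.neg.continuousAt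
        have hden : ContinuousAt (fun x => 2 * Real.sqrt (lam - V x)) x := by fun_prop
        exact ((hnum.div hden hne).div_const sq).continuousWithinAt
      set g := fun u : ℝ => -(2 * sq) * G (lam - c * u ^ 2) with hgdef2
      have hVxmem : ∀ x ∈ Set.Icc a p, V x ∈ Set.Icc Em Ep := by
        intro x hx
        exact hVxIcc x ⟨hx.1, hx.2.trans hp.2⟩
      have harg : ∀ x ∈ Set.Icc a p, lam - c * (tmap x) ^ 2 = V x := by
        intro x hx
        have h1 : (Real.sqrt (lam - V x)) ^ 2 = lam - V x := Real.sq_sqrt (hpos x hx).le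
        have h2 : sq ^ 2 = c := Real.sq_sqrt hc.le
        simp only [htmapdef, div_pow, h1, h2]
        field_simp
        ring
      have hgc : ContinuousOn g (tmap '' Set.uIcc a p) := by
        rintro y ⟨x, hx, rfl⟩
        rw [Set.uIcc_of_le hap] at hx
        have hGat : ContinuousAt G (lam - c * (tmap x) ^ 2) := by
          rw [harg x hx]
          exact (hG _ (hVxmem x hx)).continuousAt
        have h2' : ContinuousAt (G ∘ fun u : ℝ => lam - c * u ^ 2) (tmap x) :=
          ContinuousAt.comp (g := G) (f := fun u : ℝ => lam - c * u ^ 2) (x := tmap x)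
            hGat (by fun_prop)
        exact (continuousAt_const.mul h2').continuousWithinAt
      have hcv := intervalIntegral.integral_comp_smul_deriv' htd htdc hgc
      have hta : tmap a = 1 := by
        simp only [htmapdef, hVa]
        rw [← hcdef, ← hsqdef, div_self hsq.ne']
      have htp : tmap p = ε := by
        simp only [htmapdef, hVp, hs0def]
        rw [show lam - (lam - c * ε ^ 2) = c * ε ^ 2 by ring,
          Real.sqrt_mul hc.le, Real.sqrt_sq hε0.le, ← hsqdef,
          mul_comm, mul_div_assoc, div_self hsq.ne', mul_one]
      rw [hta, htp] at hcv
      have hleft : ∫ x in a..p, tder x • (g ∘ tmap) x = ∫ x in a..p, f x := by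
        refine intervalIntegral.integral_congr fun x hx => ?_
        rw [Set.uIcc_of_le hap] at hx
        have h1 : G (lam - c * (tmap x) ^ 2) = (deriv V x)⁻¹ := by
          rw [harg x hx]
          simp only [hGdef]
          rw [hWiVx x ⟨hx.1, hx.2.trans hp.2⟩]
        have hd0 : deriv V x ≠ 0 := (hV' x ⟨hx.1, hx.2.trans hp.2⟩).ne'
        have hs0' : Real.sqrt (lam - V x) ≠ 0 := (Real.sqrt_pos.mpr (hpos x hx)).ne'
        simp only [Function.comp, smul_eq_mul, hgdef2, h1, htderdef, hfdef]
        field_simp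
      rw [hleft] at hcv
      rw [hcv, intervalIntegral.integral_symm]
      have : ∀ u, g u = -((2 * sq) * G (lam - c * u ^ 2)) := fun u => by
        simp only [hgdef2]; ring
      simp only [this, intervalIntegral.integral_neg, neg_neg]
    -- limits as ε → 0⁺
    have hWilam : Wi lam = B := by rw [hWiW lam hlamIcc]
    have hptend : Filter.Tendsto (fun ε : ℝ => Wi (lam - c * ε ^ 2)) (nhdsWithin 0 (Set.Ioi 0))
        (nhds B) := by
      have h1 : Filter.Tendsto (fun ε : ℝ => lam - c * ε ^ 2) (nhds 0) (nhds lam) := by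
        have h2 : Continuous (fun ε : ℝ => lam - c * ε ^ 2) := by fun_prop
        have := h2.tendsto 0
        simpa using this
      have h2 : ContinuousAt Wi lam := (hWiSmooth lam hlamIcc).continuousAt
      have h1' : Filter.Tendsto (fun ε : ℝ => lam - c * ε ^ 2)
          (nhdsWithin 0 (Set.Ioi 0)) (nhds lam) := h1.mono_left nhdsWithin_le_nhds
      have h3 := h2.tendsto.comp h1'
      rwa [hWilam] at h3
    have hpmem : ∀ᶠ ε in nhdsWithin (0:ℝ) (Set.Ioi 0), ε ∈ Set.Ioc (0:ℝ) 1 :=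
      Ioc_mem_nhdsGT_of_mem ⟨le_refl 0, zero_lt_one⟩
    have hpIcc : ∀ ε ∈ Set.Ioc (0:ℝ) 1, Wi (lam - c * ε ^ 2) ∈ Set.Icc a B := by
      intro ε hε
      have hs0Icc : lam - c * ε ^ 2 ∈ Set.Icc Em Ep := by
        have := stmt8_key_mem hlamIoo' (Set.mem_Icc.mpr ⟨hε.1.le, hε.2⟩)
        simpa [hcdef] using this
      have h1 : Wi (lam - c * ε ^ 2) ∈ Set.Icc a b := (hWiIcc _ hs0Icc).1
      have h2 : Wi (lam - c * ε ^ 2) ≤ B := by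
        have hv1 : V (Wi (lam - c * ε ^ 2)) = lam - c * ε ^ 2 := (hWiIcc _ hs0Icc).2
        have hle : V (Wi (lam - c * ε ^ 2)) ≤ V B := by
          rw [hv1, hVB]
          nlinarith [hε.1]
        exact (hKmono.le_iff_le (habK h1) (habK hB)).mp hle
      exact ⟨h1.1, h2⟩
    have hLtend : Filter.Tendsto (fun ε : ℝ => ∫ x in a..(Wi (lam - c * ε ^ 2)), f x)
        (nhdsWithin 0 (Set.Ioi 0)) (nhds (∫ x in a..B, f x)) := by
      have hcw : ContinuousWithinAt (fun u => ∫ x in a..u, f x) (Set.Icc a B) B :=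
        hPrim B ⟨haB, le_refl B⟩
      refine hcw.tendsto.comp
        (tendsto_nhdsWithin_of_tendsto_nhds_of_eventually_within _ hptend ?_)
      filter_upwards [hpmem] with ε hε using hpIcc ε hε
    set h := fun u : ℝ => (2 * sq) * G (lam - c * u ^ 2) with hhdef
    have hhc : ContinuousOn h (Set.Icc 0 1) := by
      intro u hu
      have hmem : lam - c * u ^ 2 ∈ Set.Icc Em Ep := by
        have := stmt8_key_mem hlamIoo' hu
        simpa [hcdef] using this
      have h2' : ContinuousAt (G ∘ fun u : ℝ => lam - c * u ^ 2) u :=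
        ContinuousAt.comp (g := G) (f := fun u : ℝ => lam - c * u ^ 2) (x := u)
          ((hG _ hmem).continuousAt) (by fun_prop)
      exact (continuousAt_const.mul h2').continuousWithinAt
    have hint01 : IntervalIntegrable h volume 0 1 := by
      apply ContinuousOn.intervalIntegrable
      rwa [Set.uIcc_of_le zero_le_one]
    have hRtend : Filter.Tendsto (fun ε : ℝ => ∫ u in ε..1, h u)
        (nhdsWithin 0 (Set.Ioi 0)) (nhds (∫ u in (0:ℝ)..1, h u)) := by
      have hPrim2 : ContinuousOn (fun v => ∫ u in (0:ℝ)..v, h u) (Set.Icc 0 1) := by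
        have h1 := intervalIntegral.continuousOn_primitive_interval (a := (0:ℝ)) (b := 1)
          (f := h) (μ := volume) (by
            rw [Set.uIcc_of_le zero_le_one]
            exact hhc.integrableOn_Icc)
        rwa [Set.uIcc_of_le zero_le_one] at h1
      have h2 : Filter.Tendsto (fun ε : ℝ => ∫ u in (0:ℝ)..ε, h u)
          (nhdsWithin 0 (Set.Ioi 0)) (nhds 0) := by
        have hcw : ContinuousWithinAt (fun v => ∫ u in (0:ℝ)..v, h u) (Set.Icc 0 1) 0 :=
          hPrim2 0 ⟨le_refl 0, zero_le_one⟩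
        have h3 := hcw.tendsto.comp
          (tendsto_nhdsWithin_of_tendsto_nhds_of_eventually_within (fun ε : ℝ => ε)
            (tendsto_id.mono_left nhdsWithin_le_nhds)
            (by filter_upwards [hpmem] with ε hε using Set.Ioc_subset_Icc_self hε))
        simpa [Function.comp_def] using h3
      have hsplit : ∀ᶠ ε in nhdsWithin (0:ℝ) (Set.Ioi 0),
          (∫ u in (0:ℝ)..1, h u) - (∫ u in (0:ℝ)..ε, h u) = ∫ u in ε..1, h u := by
        filter_upwards [hpmem] with ε hε
        refine intervalIntegral.integral_interval_sub_left hint01 ?_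
        refine hint01.mono_set' ?_
        rw [Set.uIoc_of_le hε.1.le, Set.uIoc_of_le zero_le_one]
        exact Set.Ioc_subset_Ioc_right hε.2
      have h4 := Filter.Tendsto.sub (tendsto_const_nhds
        (x := ∫ u in (0:ℝ)..1, h u) (f := nhdsWithin (0:ℝ) (Set.Ioi 0))) h2
      rw [sub_zero] at h4
      exact Filter.Tendsto.congr' hsplit h4
    have hLR : ∀ᶠ ε in nhdsWithin (0:ℝ) (Set.Ioi 0),
        (fun ε : ℝ => ∫ x in a..(Wi (lam - c * ε ^ 2)), f x) ε
          = (fun ε : ℝ => ∫ u in ε..1, h u) ε := by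
      filter_upwards [hpmem] with ε hε using hsubst ε hε
    have hkey : (∫ x in a..B, f x) = ∫ u in (0:ℝ)..1, h u :=
      tendsto_nhds_unique (hLtend.congr' hLR) hRtend
    rw [hkey]
    rw [hhdef]
    rw [intervalIntegral.integral_const_mul]
    have hfinal : ∫ u in (0:ℝ)..1, G (lam - c * u ^ 2)
        = ∫ t in (0:ℝ)..1, (deriv V (W (lam * (1 - t^2) + Em * t^2)))⁻¹ := by
      refine intervalIntegral.integral_congr fun t ht => ?_
      rw [Set.uIcc_of_le zero_le_one] at ht
      have hmem : lam - c * t ^ 2 ∈ Set.Icc Em Ep := by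
        have := stmt8_key_mem hlamIoo' ht
        simpa [hcdef] using this
      have hargeq : lam * (1 - t^2) + Em * t^2 = lam - c * t ^ 2 := by
        simp only [hcdef]; ring
      simp only [hGdef, hargeq]
      rw [hWiW _ hmem]
    rw [hfinal]
  refine ⟨main, ?_⟩
  have hsqrtC : ContDiffOn ℝ (r - 1 : ℕ) (fun lam => 2 * Real.sqrt (lam - Em))
      (Set.Ioo Em Ep) := by
    intro lam hlam
    have h2 : ContDiffAt ℝ (r - 1 : ℕ) Real.sqrt (lam - Em) :=
      Real.contDiffAt_sqrt (sub_pos.mpr hlam.1).ne'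
    have h3 : ContDiffAt ℝ (r - 1 : ℕ) (fun lam : ℝ => lam - Em) lam :=
      contDiffAt_id.sub contDiffAt_const
    have h1 : ContDiffAt ℝ (r - 1 : ℕ) (fun lam : ℝ => Real.sqrt (lam - Em)) lam :=
      h2.comp lam h3
    exact (contDiffAt_const.mul h1).contDiffWithinAt
  have hparam := stmt8_paramC Em Ep (r - 1) (fun _ => 1) G continuous_const hG
  have hprod := hsqrtC.mul hparam
  refine hprod.congr fun lam hlam => ?_
  rw [main lam hlam]
  congr 1
  refine intervalIntegral.integral_congr fun t ht => ?_
  rw [Set.uIcc_of_le zero_le_one] at ht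
  have hmem : lam - (lam - Em) * t ^ 2 ∈ Set.Icc Em Ep := stmt8_key_mem hlam ht
  have hargeq : lam * (1 - t^2) + Em * t^2 = lam - (lam - Em) * t ^ 2 := by ring
  simp only [one_mul, hGdef]
  rw [hWiW _ hmem, hargeq]
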